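/- Fix 0 < q < 1 and take n = 1, so that the n,q-integral is the Jackson q-integral ∫_0^x f(t) d_q t = x(1−q)·∑_{k=0}^∞ q^k·f(x·q^k). Define f : [0,1] → ℝ by f(x) = (1/(1−q))·(4·q^{−m}·x − (1+3q)) for q^{m+1} ≤ x ≤ q^m·(1+q)/2 (m ∈ ℕ), f(x) = (4/(1−q))·(−x·q^{−m} + 1) − 1 for q^m·(1+q)/2 ≤ x ≤ q^m (m ∈ ℕ), and f(0) = 0. Then ∫_{(1+q)/2}^{1} f(t) d_q t = −(3+q)/2 and ∫_{(1+q)/2}^{1} |f(t)| d_q t = (1−q)/2; in particular |∫_{(1+q)/2}^{1} f(t) d_q t| > ∫_{(1+q)/2}^{1} |f(t)| d_q t, so the inequality |∫_a^b f d_q t| ≤ ∫_a^b |f| d_q t fails in general. -/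

import Mathlib

noncomputable section

/-- The Jackson `q`-integral `∫_0^x f(t) d_q t = x(1-q)·∑_{k=0}^∞ q^k·f(x·q^k)`. -/
def jackson (q : ℝ) (f : ℝ → ℝ) (x : ℝ) : ℝ :=
  x * (1 - q) * ∑' k : ℕ, q ^ k * f (x * q ^ k)

theorem stmt12 (q : ℝ) (hq0 : 0 < q) (hq1 : q < 1) (f : ℝ → ℝ)
    (hf0 : f 0 = 0)
    (hf1 : ∀ m : ℕ, ∀ x : ℝ, q ^ (m + 1) ≤ x → x ≤ q ^ m * (1 + q) / 2 →
      f x = (1 / (1 - q)) * (4 * x / q ^ m - (1 + 3 * q)))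
    (hf2 : ∀ m : ℕ, ∀ x : ℝ, q ^ m * (1 + q) / 2 ≤ x → x ≤ q ^ m →
      f x = (4 / (1 - q)) * (-x / q ^ m + 1) - 1) :
    jackson q f 1 - jackson q f ((1 + q) / 2) = -(3 + q) / 2 ∧
    jackson q (fun t => |f t|) 1 - jackson q (fun t => |f t|) ((1 + q) / 2)
      = (1 - q) / 2 ∧
    |jackson q f 1 - jackson q f ((1 + q) / 2)| >
      jackson q (fun t => |f t|) 1 - jackson q (fun t => |f t|) ((1 + q) / 2) := by
  have hq' : (0:ℝ) < 1 - q := by linarith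
  have hg : ∀ k : ℕ, (0:ℝ) < q ^ k := fun k => pow_pos hq0 k
  have hfa : ∀ k : ℕ, f ((1:ℝ) * q ^ k) = -1 := by
    intro k
    rw [one_mul, hf2 k (q ^ k) (by nlinarith [hg k]) le_rfl]
    field_simp
    ring
  have hfb : ∀ k : ℕ, f ((1 + q) / 2 * q ^ k) = 1 := by
    intro k
    rw [hf1 k _ (by rw [pow_succ]; nlinarith [hg k]) (le_of_eq (by ring))]
    rw [mul_div_assoc, mul_div_assoc, div_self (hg k).ne']
    field_simp
    ring
  have hsum : ∑' k : ℕ, q ^ k = (1 - q)⁻¹ := tsum_geometric_of_lt_one hq0.le hq1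
  have j1 : jackson q f 1 = -1 := by
    unfold jackson
    rw [tsum_congr (fun k => by rw [hfa k]), tsum_mul_right, hsum]
    field_simp
  have j2 : jackson q f ((1 + q) / 2) = (1 + q) / 2 := by
    unfold jackson
    rw [tsum_congr (fun k => by rw [hfb k]), tsum_mul_right, hsum]
    field_simp
  have j3 : jackson q (fun t => |f t|) 1 = 1 := by
    unfold jackson
    have : (∑' k : ℕ, q ^ k * |f (1 * q ^ k)|) = ∑' k : ℕ, q ^ k :=
      tsum_congr fun k => by rw [hfa k]; simp
    rw [this, hsum]
    field_simp
  have j4 : jackson q (fun t => |f t|) ((1 + q) / 2) = (1 + q) / 2 := by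
    unfold jackson
    have : (∑' k : ℕ, q ^ k * |f ((1 + q) / 2 * q ^ k)|) = ∑' k : ℕ, q ^ k :=
      tsum_congr fun k => by rw [hfb k]; simp
    rw [this, hsum]
    field_simp
  refine ⟨by rw [j1, j2]; ring, by rw [j3, j4]; ring, ?_⟩
  rw [j1, j2, j3, j4]
  rw [show (-1 : ℝ) - (1 + q) / 2 = -((3 + q) / 2) by ring, abs_neg,
    abs_of_pos (by linarith)]
  linarith
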